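/- Let K ⊂ ℝⁿ be a convex body, u₀ ∈ Sⁿ⁻¹ a point where the support function h_K is second order differentiable in the generalized sense, and x₀ = τ_K(u₀) = ∇h_K(u₀). Then F_K(u₀) > 0 if and only if there exists r > 0 such that B(x₀ − r·u₀, r) ⊆ K. -/

import Mathlib

open MeasureTheory Metric Set Filter
open scoped RealInnerProductSpace ENNReal NNReal Topology

noncomputable section

abbrev Euc (n : ℕ) := EuclideanSpace ℝ (Fin n)

def IsConvexBody {n : ℕ} (K : Set (Euc n)) : Prop :=
  IsCompact K ∧ Convex ℝ K ∧ (interior K).Nonempty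

def IsOuterNormalAt {n : ℕ} (K : Set (Euc n)) (u x : Euc n) : Prop :=
  x ∈ frontier K ∧ ∀ y ∈ K, ⟪y, u⟫ ≤ ⟪x, u⟫

open Classical in
/-- The Gauss map: at a regular boundary point, the unique outer unit normal. -/
def gaussMap {n : ℕ} (K : Set (Euc n)) (x : Euc n) : Euc n :=
  if h : ∃ u, ‖u‖ = 1 ∧ IsOuterNormalAt K u x then h.choose else 0

open Classical in
/-- The inverse Gauss map: at a regular normal vector, the unique boundary point
with that outer normal. -/
def gaussMapInv {n : ℕ} (K : Set (Euc n)) (u : Euc n) : Euc n :=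
  if h : ∃ x, IsOuterNormalAt K u x then h.choose else 0

/-- The (n-1)-th curvature measure: (n-1)-dimensional Hausdorff measure on the boundary. -/
def bdryMeasure (n : ℕ) (K : Set (Euc n)) : Measure (Euc n) :=
  (Measure.hausdorffMeasure ((n : ℝ) - 1)).restrict (frontier K)

/-- The 0-th curvature measure: C₀(K,β) = H^{n-1}(ν(K,β)), realized as the pushforward of
the spherical Hausdorff measure under the inverse Gauss map. -/
def curv0 (n : ℕ) (K : Set (Euc n)) : Measure (Euc n) :=
  Measure.map (gaussMapInv K)
    ((Measure.hausdorffMeasure ((n : ℝ) - 1)).restrict (Metric.sphere (0 : Euc n) 1))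

/-- The generalized Gauss curvature H_K, as density of C₀(K,·) w.r.t. C_{n-1}(K,·). -/
def gaussCurv (n : ℕ) (K : Set (Euc n)) : Euc n → ℝ≥0∞ :=
  Measure.rnDeriv (curv0 n K) (bdryMeasure n K)

/-- The surface area measure S_K, pushforward of boundary Hausdorff measure by the Gauss map. -/
def surfaceMeasure (n : ℕ) (K : Set (Euc n)) : Measure (Euc n) :=
  Measure.map (gaussMap K) (bdryMeasure n K)

/-- The generalized curvature function F_K, as density of S_K w.r.t. spherical Hausdorff measure. -/
def curvFn (n : ℕ) (K : Set (Euc n)) : Euc n → ℝ≥0∞ :=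
  Measure.rnDeriv (surfaceMeasure n K)
    ((Measure.hausdorffMeasure ((n : ℝ) - 1)).restrict (Metric.sphere (0 : Euc n) 1))

/-- The support function of K. -/
def suppFn {n : ℕ} (K : Set (Euc n)) (x : Euc n) : ℝ :=
  sSup ((fun y => ⟪y, x⟫) '' K)


/-- A linear map is symmetric. -/
def IsSymmLin {n : ℕ} (A : Euc n →ₗ[ℝ] Euc n) : Prop := ∀ x y, ⟪A x, y⟫ = ⟪x, A y⟫

open Asymptotics in
/-- Second order differentiability in the generalized (Alexandrov) sense, with
generalized Hessian A. -/
def HasGenSecondDerivAt {n : ℕ} (f : Euc n → ℝ) (A : Euc n →ₗ[ℝ] Euc n) (u : Euc n) : Prop :=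
  DifferentiableAt ℝ f u ∧ IsSymmLin A ∧
  (fun y => f y - f u - fderiv ℝ f u (y - u) - (1 / 2) * ⟪A (y - u), y - u⟫)
    =o[𝓝 u] fun y => ‖y - u‖ ^ 2

/-- The rank-one map z ↦ ⟪z,u⟫ u. -/
def rankOneProj {n : ℕ} (u : Euc n) : Euc n →ₗ[ℝ] Euc n where
  toFun z := ⟪z, u⟫ • u
  map_add' x y := by rw [inner_add_left, add_smul]
  map_smul' c x := by rw [real_inner_smul_left, mul_smul, RingHom.id_apply]

/-- For A symmetric with A u = 0 (u a unit vector), this computes det (A restricted to u^⊥):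
adding the rank-one projection onto u makes the determinant over the whole space equal to the
determinant of the restriction to u^⊥. -/
def detPerp {n : ℕ} (A : Euc n →ₗ[ℝ] Euc n) (u : Euc n) : ℝ :=
  LinearMap.det (A + rankOneProj u)

section Aux




lemma psd_null {n : ℕ} (T : Euc n →ₗ[ℝ] Euc n) (hsymm : IsSymmLin T)
    (hpsd : ∀ v, 0 ≤ ⟪T v, v⟫) {u : Euc n} (hu : ⟪T u, u⟫ = 0) : T u = 0 := by
  have key : ∀ v, ⟪T u, v⟫ = 0 := by
    intro v
    have hc : 0 ≤ ⟪T v, v⟫ := hpsd v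
    have hq : ∀ t : ℝ, 0 ≤ 2 * t * ⟪T u, v⟫ + t ^ 2 * ⟪T v, v⟫ := by
      intro t
      have h1 := hpsd (u + t • v)
      have h2 : ⟪T (u + t • v), u + t • v⟫
          = ⟪T u, u⟫ + t * ⟪T u, v⟫ + t * ⟪T v, u⟫ + t ^ 2 * ⟪T v, v⟫ := by
        simp only [_root_.map_add, _root_.map_smul, inner_add_left, inner_add_right,
          real_inner_smul_left, real_inner_smul_right]
        ring
      have h3 : ⟪T v, u⟫ = ⟪T u, v⟫ := by rw [hsymm v u, real_inner_comm]
      rw [h2, h3, hu] at h1; linarith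
    set bb := ⟪T u, v⟫ with hbb
    set cc := ⟪T v, v⟫ with hcc
    have hcc1 : 0 < cc + 1 := by linarith
    have h4 := hq (-(bb / (cc + 1)))
    have h5 : 0 ≤ (2 * (-(bb / (cc+1))) * bb + (-(bb/(cc+1)))^2 * cc) * (cc+1)^2 :=
      mul_nonneg h4 (by positivity)
    have h6 : (2 * (-(bb / (cc+1))) * bb + (-(bb/(cc+1)))^2 * cc) * (cc+1)^2
        = -(2*bb^2*(cc+1)) + bb^2*cc := by field_simp
    have hb2 : bb ^ 2 ≤ 0 := by nlinarith
    have : bb ^ 2 = 0 := le_antisymm hb2 (sq_nonneg bb)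
    exact pow_eq_zero_iff (by norm_num) |>.mp this
  have := key (T u)
  exact inner_self_eq_zero.mp this

lemma posdef_det_iff {n : ℕ} (hn : 0 < n) (T : Euc n →ₗ[ℝ] Euc n)
    (hsymm : IsSymmLin T) (hpsd : ∀ v, 0 ≤ ⟪T v, v⟫) :
    0 < LinearMap.det T ↔ ∃ c > (0:ℝ), ∀ v, c * ‖v‖ ^ 2 ≤ ⟪T v, v⟫ := by
  have hT : T.IsSymmetric := fun x y => hsymm x y
  have hfr : Module.finrank ℝ (Euc n) = n := finrank_euclideanSpace_fin
  set b := hT.eigenvectorBasis hfr with hb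
  set μ := hT.eigenvalues hfr with hμ
  have happly : ∀ v i, b.repr (T v) i = μ i * b.repr v i :=
    fun v i => hT.eigenvectorBasis_apply_self_apply hfr v i
  have hquad : ∀ v, ⟪T v, v⟫ = ∑ i, μ i * (b.repr v i) ^ 2 := by
    intro v
    rw [← b.repr.inner_map_map (T v) v, PiLp.inner_apply]
    refine Finset.sum_congr rfl fun i _ => ?_
    rw [happly]
    simp [RCLike.inner_apply]
    ring
  have hnorm : ∀ v : Euc n, ‖v‖ ^ 2 = ∑ i, (b.repr v i) ^ 2 := by
    intro v
    rw [← b.repr.norm_map v, ← real_inner_self_eq_norm_sq, PiLp.inner_apply]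
    refine Finset.sum_congr rfl fun i _ => ?_
    simp [RCLike.inner_apply]
  have hdet : LinearMap.det T = ∏ i, μ i := by
    rw [← LinearMap.det_toMatrix b.toBasis]
    have hmat : LinearMap.toMatrix b.toBasis b.toBasis T = Matrix.diagonal μ := by
      ext i j
      rw [LinearMap.toMatrix_apply, OrthonormalBasis.coe_toBasis,
        OrthonormalBasis.coe_toBasis_repr_apply, happly, OrthonormalBasis.repr_self]
      rcases eq_or_ne j i with rfl | hne
      · simp [Matrix.diagonal, EuclideanSpace.single_apply]
      · simp [Matrix.diagonal, EuclideanSpace.single_apply, hne, Ne.symm hne]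
    rw [hmat, Matrix.det_diagonal]
  have hμnn : ∀ i, 0 ≤ μ i := by
    intro i
    have h1 := hpsd (b i)
    have h2 : ⟪T (b i), b i⟫ = μ i := by
      rw [hT.apply_eigenvectorBasis hfr i]
      have : ⟪b i, b i⟫ = (1:ℝ) := by
        rw [real_inner_self_eq_norm_sq, b.orthonormal.1 i]; norm_num
      rw [real_inner_smul_left, this, mul_one]; norm_cast
    rwa [h2] at h1
  constructor
  · intro hdetpos
    have hμpos : ∀ i, 0 < μ i := by
      intro i
      rcases lt_or_eq_of_le (hμnn i) with h | h
      · exact h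
      · exfalso
        rw [hdet] at hdetpos
        rw [Finset.prod_eq_zero (Finset.mem_univ i) h.symm] at hdetpos
        exact lt_irrefl 0 hdetpos
    have hne : (Finset.univ : Finset (Fin n)).Nonempty := by
      simpa [Finset.univ_nonempty_iff] using Fin.pos_iff_nonempty.mp hn
    obtain ⟨i₀, -, hi₀⟩ := Finset.exists_min_image Finset.univ μ hne
    refine ⟨μ i₀, hμpos i₀, fun v => ?_⟩
    rw [hquad, hnorm, Finset.mul_sum]
    refine Finset.sum_le_sum fun i _ => ?_
    exact mul_le_mul_of_nonneg_right (hi₀ i (Finset.mem_univ i)) (sq_nonneg _)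
  · rintro ⟨c, hc, hbound⟩
    rw [hdet]
    refine Finset.prod_pos fun i _ => ?_
    have h1 := hbound (b i)
    rw [b.orthonormal.1 i] at h1
    have h2 : ⟪T (b i), b i⟫ = μ i := by
      rw [hT.apply_eigenvectorBasis hfr i]
      have : ⟪b i, b i⟫ = (1:ℝ) := by
        rw [real_inner_self_eq_norm_sq, b.orthonormal.1 i]; norm_num
      rw [real_inner_smul_left, this, mul_one]; norm_cast
    rw [h2] at h1; simpa using lt_of_lt_of_le (by simpa using hc) h1



variable {n : ℕ} {K : Set (Euc n)}

lemma suppFn_ge (hcomp : IsCompact K) {y x : Euc n} (hy : y ∈ K) : ⟪y, x⟫ ≤ suppFn K x := by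
  refine le_csSup ?_ ⟨y, hy, rfl⟩
  exact (hcomp.image (continuous_id.inner continuous_const)).bddAbove

lemma suppFn_le (hne : K.Nonempty) {x : Euc n} {c : ℝ} (h : ∀ y ∈ K, ⟪y, x⟫ ≤ c) :
    suppFn K x ≤ c := by
  refine csSup_le (hne.image _) ?_
  rintro - ⟨y, hy, rfl⟩; exact h y hy

lemma suppFn_add (hcomp : IsCompact K) (hne : K.Nonempty) (x y : Euc n) :
    suppFn K (x + y) ≤ suppFn K x + suppFn K y := by
  refine suppFn_le hne fun z hz => ?_
  rw [inner_add_right]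
  exact add_le_add (suppFn_ge hcomp hz) (suppFn_ge hcomp hz)

lemma suppFn_smul (hcomp : IsCompact K) (hne : K.Nonempty) {t : ℝ} (ht : 0 ≤ t) (x : Euc n) :
    suppFn K (t • x) = t * suppFn K x := by
  have hle : ∀ (s : ℝ), 0 ≤ s → ∀ z : Euc n, suppFn K (s • z) ≤ s * suppFn K z := by
    intro s hs z
    refine suppFn_le hne fun y hy => ?_
    rw [real_inner_smul_right]
    exact mul_le_mul_of_nonneg_left (suppFn_ge hcomp hy) hs
  rcases eq_or_lt_of_le ht with rfl | htpos
  · have h0 : suppFn K ((0:ℝ) • x) = 0 := by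
      have h1 : suppFn K ((0:ℝ) • x) ≤ 0 := suppFn_le hne fun y hy => by simp
      have h2 : (0:ℝ) ≤ suppFn K ((0:ℝ) • x) := by
        obtain ⟨y, hy⟩ := hne
        simpa using suppFn_ge hcomp (x := (0:ℝ) • x) hy
      linarith
    rw [h0]; ring
  · refine le_antisymm (hle t ht x) ?_
    have h2 := hle t⁻¹ (by positivity) (t • x)
    rw [inv_smul_smul₀ (ne_of_gt htpos)] at h2
    calc t * suppFn K x ≤ t * (t⁻¹ * suppFn K (t • x)) :=
          mul_le_mul_of_nonneg_left h2 ht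
      _ = suppFn K (t • x) := by field_simp

lemma suppFn_lipschitz (hcomp : IsCompact K) (hne : K.Nonempty) :
    ∃ R : ℝ, 0 ≤ R ∧ ∀ x y : Euc n, suppFn K x ≤ suppFn K y + R * ‖x - y‖ := by
  obtain ⟨R, hR⟩ := hcomp.isBounded.subset_closedBall 0
  obtain ⟨z₀, hz₀⟩ := id hne
  have hRnn : 0 ≤ R := le_trans (norm_nonneg z₀) (by simpa using hR hz₀)
  refine ⟨R, hRnn, fun x y => ?_⟩
  refine suppFn_le hne fun z hz => ?_
  have h1 : ⟪z, x⟫ = ⟪z, y⟫ + ⟪z, x - y⟫ := by rw [← inner_add_right, add_sub_cancel]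
  have h2 : ⟪z, x - y⟫ ≤ R * ‖x - y‖ := by
    calc ⟪z, x - y⟫ ≤ ‖z‖ * ‖x - y‖ := real_inner_le_norm z _
      _ ≤ R * ‖x - y‖ := by
          have := hR hz
          simp only [mem_closedBall, dist_zero_right] at this
          exact mul_le_mul_of_nonneg_right this (norm_nonneg _)
  have h3 := suppFn_ge hcomp hz (x := y)
  linarith

lemma suppFn_continuous (hcomp : IsCompact K) (hne : K.Nonempty) :
    Continuous (suppFn K) := by
  obtain ⟨R, hRnn, hR⟩ := suppFn_lipschitz hcomp hne
  have : LipschitzWith (Real.toNNReal R) (suppFn K) := by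
    refine LipschitzWith.of_dist_le_mul fun x y => ?_
    rw [Real.dist_eq, abs_sub_le_iff]
    constructor
    · have := hR x y; rw [Real.coe_toNNReal _ hRnn]; rw [← dist_eq_norm] at this; linarith
    · have := hR y x; rw [Real.coe_toNNReal _ hRnn]
      rw [← dist_eq_norm, dist_comm] at this; linarith
  exact this.continuous

lemma mem_of_suppFn (hcomp : IsCompact K) (hconv : Convex ℝ K) (hne : K.Nonempty)
    {z : Euc n} (hz : ∀ v, ⟪z, v⟫ ≤ suppFn K v) : z ∈ K := by
  by_contra hzK
  obtain ⟨f, u, hfa, hfz⟩ := geometric_hahn_banach_closed_point hconv hcomp.isClosed hzK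
  set v := (InnerProductSpace.toDual ℝ (Euc n)).symm f with hv
  have hfv : ∀ w : Euc n, ⟪v, w⟫ = f w := fun w => InnerProductSpace.toDual_symm_apply
  have h1 : suppFn K v ≤ u := suppFn_le hne fun y hy => by
    rw [real_inner_comm, hfv]; exact le_of_lt (hfa y hy)
  have h2 := hz v
  rw [real_inner_comm, hfv] at h2
  linarith



lemma inner_perp_part {n : ℕ} {u₀ : Euc n} (hu₀ : ‖u₀‖ = 1) (d : Euc n) :
    ⟪d - ⟪d, u₀⟫ • u₀, u₀⟫ = 0 := by
  have h1 : ⟪u₀, u₀⟫ = (1:ℝ) := by rw [real_inner_self_eq_norm_sq, hu₀]; norm_num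
  rw [inner_sub_left, real_inner_smul_left, h1]; ring

lemma norm_sq_decomp {n : ℕ} {u₀ : Euc n} (hu₀ : ‖u₀‖ = 1) (d : Euc n) :
    ‖d‖ ^ 2 = ‖d - ⟪d, u₀⟫ • u₀‖ ^ 2 + ⟪d, u₀⟫ ^ 2 := by
  have hw : ⟪d - ⟪d, u₀⟫ • u₀, u₀⟫ = 0 := inner_perp_part hu₀ d
  have hd : d = (d - ⟪d, u₀⟫ • u₀) + ⟪d, u₀⟫ • u₀ := by abel
  conv_lhs => rw [hd]
  rw [norm_add_sq_real, real_inner_smul_right, hw, norm_smul]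
  simp [hu₀, mul_pow, sq_abs]


lemma quad_perp {n : ℕ} {A : Euc n →ₗ[ℝ] Euc n} (hsymm : IsSymmLin A) {u₀ : Euc n}
    (hA0 : A u₀ = 0) (d : Euc n) :
    ⟪A d, d⟫ = ⟪A (d - ⟪d, u₀⟫ • u₀), d - ⟪d, u₀⟫ • u₀⟫ := by
  have h1 : A (d - ⟪d, u₀⟫ • u₀) = A d := by
    rw [_root_.map_sub, _root_.map_smul, hA0, smul_zero, sub_zero]
  have h2 : ⟪A d, u₀⟫ = 0 := by rw [hsymm d u₀, hA0, inner_zero_right]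
  rw [h1, inner_sub_right, real_inner_smul_right, h2]; ring

end Aux

set_option maxHeartbeats 2000000 in
theorem statement17 (n : ℕ) (hn : 0 < n) (K : Set (Euc n)) (hK : IsConvexBody K)
    (u₀ : Euc n) (hu₀ : ‖u₀‖ = 1) (A : Euc n →ₗ[ℝ] Euc n)
    (hA : HasGenSecondDerivAt (suppFn K) A u₀) :
    0 < detPerp A u₀ ↔
      ∃ r > (0 : ℝ), Metric.ball (gradient (suppFn K) u₀ - r • u₀) r ⊆ K := by
  obtain ⟨hcomp, hconv, hint⟩ := hK
  have hne : K.Nonempty := hint.mono interior_subset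
  obtain ⟨hdiff, hsymmA, ho⟩ := hA
  set x₀ : Euc n := gradient (suppFn K) u₀ with hx₀def
  have hx₀ : ∀ v, ⟪x₀, v⟫ = fderiv ℝ (suppFn K) u₀ v := by
    intro v
    rw [hx₀def]
    exact InnerProductSpace.toDual_symm_apply
  have hu₀u₀ : ⟪u₀, u₀⟫ = (1:ℝ) := by
    rw [real_inner_self_eq_norm_sq, hu₀]; norm_num
  have hline : ∀ v : Euc n, HasDerivAt (fun t : ℝ => suppFn K (u₀ + t • v)) (fderiv ℝ (suppFn K) u₀ v) 0 := by
    intro v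
    have hc : HasDerivAt (fun t : ℝ => u₀ + t • v) v 0 := by
      simpa using ((hasDerivAt_id (0:ℝ)).smul_const v).const_add u₀
    have h0 : u₀ + (0:ℝ) • v = u₀ := by simp
    have hF : HasFDerivAt (suppFn K) (fderiv ℝ (suppFn K) u₀) (u₀ + (0:ℝ) • v) := by
      rw [h0]; exact hdiff.hasFDerivAt
    exact hF.comp_hasDerivAt 0 hc
  have hval : ⟪x₀, u₀⟫ = suppFn K u₀ := by
    have h2 : HasDerivAt (fun t : ℝ => (1 + t) * suppFn K u₀) (suppFn K u₀) 0 := by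
      simpa using ((hasDerivAt_id (0:ℝ)).const_add 1).mul_const (suppFn K u₀)
    have heq : (fun t : ℝ => suppFn K (u₀ + t • u₀)) =ᶠ[𝓝 (0:ℝ)] (fun t : ℝ => (1 + t) * suppFn K u₀) := by
      filter_upwards [Ioo_mem_nhds (by norm_num : (-1:ℝ) < 0) (by norm_num : (0:ℝ) < 1)] with t ht
      have h1t : (0:ℝ) ≤ 1 + t := by linarith [ht.1]
      have hrw : u₀ + t • u₀ = (1 + t) • u₀ := by rw [add_smul, one_smul]
      rw [hrw]
      exact suppFn_smul hcomp hne h1t u₀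
    have h3 : HasDerivAt (fun t : ℝ => suppFn K (u₀ + t • u₀)) (suppFn K u₀) 0 :=
      h2.congr_of_eventuallyEq heq
    have h4 := (hline u₀).unique h3
    rw [hx₀ u₀, h4]
  have hx₀le : ∀ v, ⟪x₀, v⟫ ≤ suppFn K v := by
    intro v
    rw [hx₀ v]
    have hslope : Tendsto (fun t : ℝ => (suppFn K (u₀ + t • v) - suppFn K u₀) / t) (𝓝[>] 0)
        (𝓝 (fderiv ℝ (suppFn K) u₀ v)) := by
      have h1 := hasDerivAt_iff_tendsto_slope.mp (hline v)
      have h2 := h1.mono_left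
        (nhdsWithin_mono _ (fun t (ht : t ∈ Ioi (0:ℝ)) => ne_of_gt ht : Ioi (0:ℝ) ⊆ {(0:ℝ)}ᶜ))
      refine h2.congr fun t => ?_
      simp [slope_def_field]
    refine le_of_tendsto hslope ?_
    filter_upwards [self_mem_nhdsWithin] with t ht
    rw [Set.mem_Ioi] at ht
    rw [div_le_iff₀ ht]
    have hsum : suppFn K (u₀ + t • v) ≤ suppFn K u₀ + t * suppFn K v := by
      calc suppFn K (u₀ + t • v) ≤ suppFn K u₀ + suppFn K (t • v) := suppFn_add hcomp hne _ _
        _ = suppFn K u₀ + t * suppFn K v := by rw [suppFn_smul hcomp hne (le_of_lt ht)]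
    linarith
  set g : Euc n → ℝ := fun v => suppFn K v - ⟪x₀, v⟫ with hg
  have hg0 : ∀ v, 0 ≤ g v := fun v => sub_nonneg.2 (hx₀le v)
  have hgu₀ : g u₀ = 0 := by
    simp only [hg]; rw [← hval]; ring
  have ho' : (fun y => g y - (1/2) * ⟪A (y - u₀), y - u₀⟫)
      =o[𝓝 u₀] (fun y : Euc n => ‖y - u₀‖ ^ 2) := by
    refine ho.congr' (Eventually.of_forall fun y => ?_) (Eventually.of_forall fun y => rfl)
    have hd : (fderiv ℝ (suppFn K) u₀) (y - u₀) = ⟪x₀, y⟫ - suppFn K u₀ := by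
      rw [← hx₀, inner_sub_right, hval]
    simp only [hg]
    rw [hd]
    ring
  have hquadlim : ∀ v : Euc n, Tendsto (fun t : ℝ => g (u₀ + t • v) / t ^ 2) (𝓝[>] (0:ℝ))
      (𝓝 ((1/2) * ⟪A v, v⟫)) := by
    intro v
    have hmap : Tendsto (fun t : ℝ => u₀ + t • v) (𝓝[>] (0:ℝ)) (𝓝 u₀) := by
      have hcont : Continuous fun t : ℝ => u₀ + t • v := by continuity
      have h1 : Tendsto (fun t : ℝ => u₀ + t • v) (𝓝[>] (0:ℝ)) (𝓝 (u₀ + (0:ℝ) • v)) :=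
        (hcont.tendsto 0).mono_left nhdsWithin_le_nhds
      simpa using h1
    have h1 := ho'.comp_tendsto hmap
    simp only [Function.comp_def, add_sub_cancel_left] at h1
    have h2 : (fun t : ℝ => ‖t • v‖ ^ 2) =O[𝓝[>] (0:ℝ)] (fun t : ℝ => t ^ 2) := by
      refine Asymptotics.IsBigO.of_bound (‖v‖ ^ 2) ?_
      filter_upwards with t
      have e1 : ‖(‖t • v‖ ^ 2 : ℝ)‖ = t ^ 2 * ‖v‖ ^ 2 := by
        rw [Real.norm_eq_abs, abs_of_nonneg (sq_nonneg _), norm_smul, mul_pow]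
        simp [Real.norm_eq_abs, sq_abs]
      have e2 : ‖(t:ℝ) ^ 2‖ = t ^ 2 := by
        rw [Real.norm_eq_abs, abs_of_nonneg (sq_nonneg _)]
      rw [e1, e2, mul_comm]
    have h3 := (h1.trans_isBigO h2).tendsto_div_nhds_zero
    have hAq : ∀ t : ℝ, ⟪A (t • v), t • v⟫ = t ^ 2 * ⟪A v, v⟫ := by
      intro t
      rw [_root_.map_smul, real_inner_smul_left, real_inner_smul_right]; ring
    have h4 : Tendsto (fun t : ℝ =>
        (g (u₀ + t • v) - (1/2) * ⟪A (t • v), t • v⟫) / t ^ 2 + (1/2) * ⟪A v, v⟫)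
        (𝓝[>] (0:ℝ)) (𝓝 ((1/2) * ⟪A v, v⟫)) := by
      have h4' := h3.add_const ((1/2) * ⟪A v, v⟫)
      rw [zero_add] at h4'
      exact h4'
    refine Tendsto.congr' ?_ h4
    filter_upwards [self_mem_nhdsWithin] with t ht
    rw [Set.mem_Ioi] at ht
    have ht' : t ≠ 0 := ne_of_gt ht
    rw [hAq]
    field_simp
    ring
  have hpsd : ∀ v : Euc n, 0 ≤ ⟪A v, v⟫ := by
    intro v
    have h1 : (0:ℝ) ≤ (1/2) * ⟪A v, v⟫ :=
      ge_of_tendsto (hquadlim v)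
        (by filter_upwards with t; exact div_nonneg (hg0 _) (sq_nonneg _))
    linarith
  have hAu₀ : ⟪A u₀, u₀⟫ = 0 := by
    have hzero : Tendsto (fun t : ℝ => g (u₀ + t • u₀) / t ^ 2) (𝓝[>] (0:ℝ)) (𝓝 0) := by
      refine Tendsto.congr' ?_ tendsto_const_nhds
      filter_upwards [Ioo_mem_nhdsGT_of_mem (by constructor <;> norm_num : (0:ℝ) ∈ Ico (0:ℝ) 1)]
        with t ht
      have h1t : (0:ℝ) ≤ 1 + t := by linarith [ht.1]
      have hrw : u₀ + t • u₀ = (1 + t) • u₀ := by rw [add_smul, one_smul]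
      have hzero' : g (u₀ + t • u₀) = 0 := by
        simp only [hg]
        rw [hrw, suppFn_smul hcomp hne h1t, real_inner_smul_right, hval]
        ring
      rw [hzero', zero_div]
    have huniq := tendsto_nhds_unique (hquadlim u₀) hzero
    linarith
  have hA0 : A u₀ = 0 := psd_null A hsymmA hpsd hAu₀
  set B : Euc n →ₗ[ℝ] Euc n := A + rankOneProj u₀ with hB
  have hPapp : ∀ z : Euc n, rankOneProj u₀ z = ⟪z, u₀⟫ • u₀ := fun z => rfl
  have hBapp : ∀ v, ⟪B v, v⟫ = ⟪A v, v⟫ + ⟪v, u₀⟫ ^ 2 := by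
    intro v
    simp only [hB, LinearMap.add_apply, inner_add_left, hPapp, real_inner_smul_left]
    have hcomm : ⟪u₀, v⟫ = ⟪v, u₀⟫ := real_inner_comm _ _
    rw [hcomm]; ring
  have hBsymm : IsSymmLin B := by
    intro x y
    simp only [hB, LinearMap.add_apply, inner_add_left, inner_add_right, hPapp,
      real_inner_smul_left, real_inner_smul_right, hsymmA x y]
    have h1 : ⟪u₀, y⟫ = ⟪y, u₀⟫ := real_inner_comm _ _
    rw [h1]; ring
  have hquadB : ∀ d : Euc n, ⟪A d, d⟫ = ⟪A (d - ⟪d, u₀⟫ • u₀), d - ⟪d, u₀⟫ • u₀⟫ :=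
    quad_perp hsymmA hA0
  have hBpsd : ∀ v, 0 ≤ ⟪B v, v⟫ := fun v => by
    rw [hBapp]; exact add_nonneg (hpsd v) (sq_nonneg _)
  have hdetB : detPerp A u₀ = LinearMap.det B := rfl
  rw [hdetB, posdef_det_iff hn B hBsymm hBpsd]
  have hone_sub : ∀ v : Euc n, ‖v‖ = 1 → 1 - ⟪u₀, v⟫ = ‖v - u₀‖ ^ 2 / 2 := by
    intro v hv
    have h1 := norm_sub_sq_real v u₀
    have hcomm : ⟪v, u₀⟫ = ⟪u₀, v⟫ := real_inner_comm _ _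
    rw [hv, hu₀, hcomm] at h1
    simp only [one_pow] at h1
    linarith
  have hscale : ∀ r : ℝ, 0 < r → (∀ v : Euc n, ‖v‖ = 1 → r * (1 - ⟪u₀, v⟫) ≤ g v) →
      ∀ v : Euc n, r * (‖v‖ - ⟪u₀, v⟫) ≤ g v := by
    intro r hr hunit v
    rcases eq_or_ne v 0 with rfl | hv0
    · simpa using hg0 0
    · have hnv : 0 < ‖v‖ := norm_pos_iff.mpr hv0
      have hvh1 : ‖‖v‖⁻¹ • v‖ = 1 := by
        rw [norm_smul, Real.norm_eq_abs, abs_of_pos (by positivity)]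
        field_simp
      have hb := hunit (‖v‖⁻¹ • v) hvh1
      have hv' : v = ‖v‖ • (‖v‖⁻¹ • v) := by
        rw [smul_smul]
        rw [mul_inv_cancel₀ (ne_of_gt hnv), one_smul]
      have hgs : g v = ‖v‖ * g (‖v‖⁻¹ • v) := by
        simp only [hg]
        conv_lhs => rw [hv']
        rw [suppFn_smul hcomp hne (le_of_lt hnv), real_inner_smul_right]
        ring
      have hinner : ⟪u₀, v⟫ = ‖v‖ * ⟪u₀, ‖v‖⁻¹ • v⟫ := by
        conv_lhs => rw [hv']
        rw [real_inner_smul_right]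
      rw [hgs, hinner]
      nlinarith [hb, hnv]
  have hball_of : ∀ r : ℝ, 0 < r → (∀ v : Euc n, r * (‖v‖ - ⟪u₀, v⟫) ≤ g v) →
      Metric.ball (x₀ - r • u₀) r ⊆ K := by
    intro r hr hkey y hy
    refine mem_of_suppFn hcomp hconv hne fun v => ?_
    have hwn : ‖y - (x₀ - r • u₀)‖ ≤ r := le_of_lt (mem_ball_iff_norm.mp hy)
    have h1 : ⟪y - (x₀ - r • u₀), v⟫ ≤ r * ‖v‖ :=
      le_trans (real_inner_le_norm _ _) (mul_le_mul_of_nonneg_right hwn (norm_nonneg _))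
    have h2 := hkey v
    have hgv : g v = suppFn K v - ⟪x₀, v⟫ := rfl
    have h3 : ⟪y, v⟫ = ⟪x₀, v⟫ - r * ⟪u₀, v⟫ + ⟪y - (x₀ - r • u₀), v⟫ := by
      have hyw : y = x₀ - r • u₀ + (y - (x₀ - r • u₀)) := by abel
      conv_lhs => rw [hyw]
      rw [inner_add_left, inner_sub_left, real_inner_smul_left]
    rw [h3]
    nlinarith [h1, h2]
  have hbound_of_ball : ∀ r : ℝ, 0 < r → Metric.ball (x₀ - r • u₀) r ⊆ K →
      ∀ v : Euc n, r * (‖v‖ - ⟪u₀, v⟫) ≤ g v := by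
    intro r hr hball v
    rcases eq_or_ne v 0 with rfl | hv0
    · simpa using hg0 0
    have hnv : 0 < ‖v‖ := norm_pos_iff.mpr hv0
    have hmem : ∀ s : ℝ, s ∈ Ioo (0:ℝ) r → s * ‖v‖ - r * ⟪u₀, v⟫ ≤ g v := by
      intro s hs
      have hpt : x₀ - r • u₀ + s • (‖v‖⁻¹ • v) ∈ K := by
        apply hball
        rw [mem_ball_iff_norm]
        have he : x₀ - r • u₀ + s • (‖v‖⁻¹ • v) - (x₀ - r • u₀) = s • (‖v‖⁻¹ • v) := by abel
        rw [he, norm_smul, norm_smul, Real.norm_eq_abs, Real.norm_eq_abs,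
          abs_of_pos hs.1, abs_of_pos (by positivity : (0:ℝ) < ‖v‖⁻¹)]
        calc s * (‖v‖⁻¹ * ‖v‖) = s := by field_simp
          _ < r := hs.2
      have hineq := suppFn_ge hcomp hpt (x := v)
      rw [inner_add_left, inner_sub_left, real_inner_smul_left, real_inner_smul_left,
        real_inner_smul_left, real_inner_self_eq_norm_sq] at hineq
      have hvsimp : ‖v‖⁻¹ * ‖v‖ ^ 2 = ‖v‖ := by
        field_simp
      rw [hvsimp] at hineq
      have hgv : g v = suppFn K v - ⟪x₀, v⟫ := rfl
      linarith
    have htends : Tendsto (fun s : ℝ => s * ‖v‖ - r * ⟪u₀, v⟫) (𝓝[<] r)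
        (𝓝 (r * ‖v‖ - r * ⟪u₀, v⟫)) := by
      have hcont : Continuous fun s : ℝ => s * ‖v‖ - r * ⟪u₀, v⟫ := by continuity
      exact (hcont.tendsto r).mono_left nhdsWithin_le_nhds
    have hev : ∀ᶠ s in 𝓝[<] r, s * ‖v‖ - r * ⟪u₀, v⟫ ≤ g v := by
      filter_upwards [Ioo_mem_nhdsLT_of_mem (⟨hr, le_refl r⟩ : r ∈ Ioc (0:ℝ) r)] with s hs
      exact hmem s hs
    have hle := le_of_tendsto htends hev
    nlinarith [hle]
  constructor
  · rintro ⟨c, hc, hcB⟩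
    have hAperp : ∀ w : Euc n, ⟪w, u₀⟫ = 0 → c * ‖w‖ ^ 2 ≤ ⟪A w, w⟫ := by
      intro w hw
      have h1 := hcB w
      rw [hBapp, hw] at h1
      simpa using h1
    obtain ⟨δ, hδpos, hδ⟩ : ∃ δ > 0, ∀ y : Euc n, dist y u₀ < δ →
        |g y - (1/2) * ⟪A (y - u₀), y - u₀⟫| ≤ (c/8) * ‖y - u₀‖ ^ 2 := by
      have hev := ho'.def (show (0:ℝ) < c/8 by positivity)
      rw [Metric.eventually_nhds_iff] at hev
      obtain ⟨δ, hδpos, hδ⟩ := hev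
      refine ⟨δ, hδpos, fun y hy => ?_⟩
      have h1 := hδ hy
      have h2 : ‖(‖y - u₀‖ ^ 2 : ℝ)‖ = ‖y - u₀‖ ^ 2 := by
        rw [Real.norm_eq_abs, abs_of_nonneg (sq_nonneg _)]
      rw [h2] at h1
      rwa [Real.norm_eq_abs] at h1
    have hlocal : ∀ v : Euc n, ‖v‖ = 1 → ‖v - u₀‖ < min δ 1 →
        (c/4) * ‖v - u₀‖ ^ 2 ≤ g v := by
      intro v hv hvd
      have hdu : ⟪v - u₀, u₀⟫ = -(‖v - u₀‖ ^ 2 / 2) := by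
        have h2 : ‖v‖ ^ 2 = ‖v - u₀‖ ^ 2 + 2 * ⟪v - u₀, u₀⟫ + ‖u₀‖ ^ 2 := by
          have hve : v = (v - u₀) + u₀ := by abel
          conv_lhs => rw [hve]
          rw [norm_add_sq_real]
        rw [hv, hu₀] at h2
        simp only [one_pow] at h2
        linarith
      have hwnorm := norm_sq_decomp hu₀ (v - u₀)
      have hd1 : ‖v - u₀‖ ≤ 1 := le_of_lt (lt_of_lt_of_le hvd (min_le_right _ _))
      have ha2 : ⟪v - u₀, u₀⟫ ^ 2 ≤ ‖v - u₀‖ ^ 2 / 4 := by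
        rw [hdu]
        have h0 : (0:ℝ) ≤ ‖v - u₀‖ := norm_nonneg _
        have hsq1 : ‖v - u₀‖ ^ 2 ≤ 1 := by nlinarith
        nlinarith [hsq1, sq_nonneg ‖v - u₀‖,
          mul_nonneg (sq_nonneg ‖v - u₀‖) (sub_nonneg.mpr hsq1)]
      have hAd : (3*c/4) * ‖v - u₀‖ ^ 2 ≤ ⟪A (v - u₀), v - u₀⟫ := by
        rw [hquadB (v - u₀)]
        have hwle := hAperp (v - u₀ - ⟪v - u₀, u₀⟫ • u₀) (inner_perp_part hu₀ (v - u₀))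
        nlinarith [hwle, hwnorm, ha2, hc.le,
          mul_le_mul_of_nonneg_left ha2 hc.le]
      have hloc := hδ v (by rw [dist_eq_norm]; exact lt_of_lt_of_le hvd (min_le_left _ _))
      have habs := abs_le.mp hloc
      linarith [habs.1, hAd]
    have hg_cont : Continuous g := by
      have : Continuous fun v : Euc n => suppFn K v - ⟪x₀, v⟫ :=
        (suppFn_continuous hcomp hne).sub (continuous_const.inner continuous_id)
      exact this
    have hgpos : ∀ v : Euc n, ‖v‖ = 1 → v ≠ u₀ → 0 < g v := by
      intro v hv hvne
      rcases lt_or_eq_of_le (hg0 v) with hlt | heq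
      · exact hlt
      exfalso
      have hgv : g v = 0 := heq.symm
      have hseg : ∀ t ∈ Ioo (0:ℝ) 1, g (u₀ + t • (v - u₀)) = 0 := by
        intro t ht
        have hpt : u₀ + t • (v - u₀) = (1-t) • u₀ + t • v := by module
        have h1 : suppFn K ((1-t) • u₀ + t • v)
            ≤ (1-t) * suppFn K u₀ + t * suppFn K v := by
          refine suppFn_le hne fun z hz => ?_
          rw [inner_add_right, real_inner_smul_right, real_inner_smul_right]
          have g1 := suppFn_ge hcomp hz (x := u₀)
          have g2 := suppFn_ge hcomp hz (x := v)
          have ht1 : 0 ≤ 1 - t := by linarith [ht.2]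
          have ht0 : 0 ≤ t := le_of_lt ht.1
          nlinarith
        have h2 : ⟪x₀, (1-t) • u₀ + t • v⟫ = (1-t) * ⟪x₀, u₀⟫ + t * ⟪x₀, v⟫ := by
          rw [inner_add_right, real_inner_smul_right, real_inner_smul_right]
        have hgeq : g (u₀ + t • (v - u₀))
            = suppFn K ((1-t) • u₀ + t • v) - ⟪x₀, (1-t) • u₀ + t • v⟫ := by
          rw [hpt]
        have hgu' : g u₀ = suppFn K u₀ - ⟪x₀, u₀⟫ := rfl
        have hgv' : g v = suppFn K v - ⟪x₀, v⟫ := rfl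
        have hub : g (u₀ + t • (v - u₀)) ≤ 0 := by
          have e1 : suppFn K u₀ = ⟪x₀, u₀⟫ := by
            have e := hgu₀
            simp only [hg] at e
            linarith
          have e2 : suppFn K v = ⟪x₀, v⟫ := by
            have e := hgv
            simp only [hg] at e
            linarith
          rw [e1, e2] at h1
          rw [hgeq, h2]
          linarith
        linarith [hg0 (u₀ + t • (v - u₀))]
      have hzero : Tendsto (fun t : ℝ => g (u₀ + t • (v - u₀)) / t ^ 2) (𝓝[>] (0:ℝ)) (𝓝 0) := by
        refine Tendsto.congr' ?_ tendsto_const_nhds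
        filter_upwards [Ioo_mem_nhdsGT_of_mem
          (⟨le_refl (0:ℝ), zero_lt_one⟩ : (0:ℝ) ∈ Ico (0:ℝ) 1)] with t ht
        rw [hseg t ht, zero_div]
      have hAd : ⟪A (v - u₀), v - u₀⟫ = 0 := by
        have huniq := tendsto_nhds_unique (hquadlim (v - u₀)) hzero
        linarith
      have hw0 : v - u₀ - ⟪v - u₀, u₀⟫ • u₀ = 0 := by
        have h2 := hAperp (v - u₀ - ⟪v - u₀, u₀⟫ • u₀) (inner_perp_part hu₀ (v - u₀))
        rw [← hquadB (v - u₀), hAd] at h2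
        have h3 : ‖v - u₀ - ⟪v - u₀, u₀⟫ • u₀‖ ^ 2 ≤ 0 := by nlinarith
        have h4 : ‖v - u₀ - ⟪v - u₀, u₀⟫ • u₀‖ = 0 := by
          nlinarith [norm_nonneg (v - u₀ - ⟪v - u₀, u₀⟫ • u₀)]
        exact norm_eq_zero.mp h4
      have hda : v - u₀ = ⟪v - u₀, u₀⟫ • u₀ := by
        have := sub_eq_zero.mp hw0
        exact this
      have hv' : v = u₀ + ⟪v - u₀, u₀⟫ • u₀ := by
        rw [← hda]
        abel
      have h6 : u₀ + ⟪v - u₀, u₀⟫ • u₀ = (1 + ⟪v - u₀, u₀⟫) • u₀ := by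
        rw [add_smul, one_smul]
      have habs1 : |1 + ⟪v - u₀, u₀⟫| = 1 := by
        have h5 : ‖v‖ = |1 + ⟪v - u₀, u₀⟫| * ‖u₀‖ := by
          conv_lhs => rw [hv', h6]
          rw [norm_smul, Real.norm_eq_abs]
        rw [hv, hu₀] at h5
        linarith
      rcases (abs_eq (by norm_num : (0:ℝ) ≤ 1)).mp habs1 with h7 | h7
      · have h8 : ⟪v - u₀, u₀⟫ = 0 := by linarith
        have : v = u₀ := by rw [hv', h8]; simp
        exact hvne this
      · have h8 : ⟪v - u₀, u₀⟫ = -2 := by linarith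
        have hvm : v = -u₀ := by
          rw [hv', h8]
          module
        have hgm : g (-u₀) = 0 := by rw [← hvm]; exact hgv
        have hm : suppFn K (-u₀) = -(suppFn K u₀) := by
          have h1 : g (-u₀) = suppFn K (-u₀) - ⟪x₀, -u₀⟫ := rfl
          rw [inner_neg_right, hval] at h1
          rw [hgm] at h1
          linarith
        have hKhyp : ∀ z ∈ K, ⟪z, u₀⟫ = suppFn K u₀ := by
          intro z hz
          have e1 := suppFn_ge hcomp hz (x := u₀)
          have e2 := suppFn_ge hcomp hz (x := -u₀)
          rw [inner_neg_right, hm] at e2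
          linarith
        obtain ⟨z, hzint⟩ := hint
        obtain ⟨ε, hεpos, hballz⟩ := Metric.isOpen_iff.mp isOpen_interior z hzint
        have hz2 : z + (ε/2) • u₀ ∈ K := by
          apply interior_subset
          apply hballz
          rw [mem_ball_iff_norm]
          have he : z + (ε/2) • u₀ - z = (ε/2) • u₀ := by abel
          rw [he, norm_smul, Real.norm_eq_abs, abs_of_pos (by positivity), hu₀]
          linarith
        have e1 := hKhyp z (interior_subset hzint)
        have e2 := hKhyp _ hz2
        rw [inner_add_left, real_inner_smul_left, hu₀u₀] at e2
        linarith
    have hrex : ∃ r > (0:ℝ), ∀ v : Euc n, ‖v‖ = 1 → r * (1 - ⟪u₀, v⟫) ≤ g v := by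
      have hδ'pos : 0 < min δ 1 := lt_min hδpos one_pos
      rcases eq_empty_or_nonempty {v : Euc n | ‖v‖ = 1 ∧ min δ 1 ≤ ‖v - u₀‖} with hSe | hSne
      · refine ⟨c/4, by positivity, fun v hv => ?_⟩
        have hvd : ‖v - u₀‖ < min δ 1 := by
          by_contra hcon
          exact eq_empty_iff_forall_notMem.mp hSe v ⟨hv, le_of_not_gt hcon⟩
        have hl := hlocal v hv hvd
        rw [hone_sub v hv]
        nlinarith [hl, hc.le, sq_nonneg ‖v - u₀‖, mul_nonneg hc.le (sq_nonneg ‖v - u₀‖)]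
      · have hScompact : IsCompact {v : Euc n | ‖v‖ = 1 ∧ min δ 1 ≤ ‖v - u₀‖} := by
          have hSeq : {v : Euc n | ‖v‖ = 1 ∧ min δ 1 ≤ ‖v - u₀‖}
              = (sphere (0:Euc n) 1) ∩ {v | min δ 1 ≤ ‖v - u₀‖} := by
            ext v
            simp [mem_sphere_zero_iff_norm]
          rw [hSeq]
          exact (isCompact_sphere 0 1).inter_right
            (isClosed_le continuous_const (continuous_id.sub continuous_const).norm)
        obtain ⟨v₀, hv₀S, hv₀min'⟩ := hScompact.exists_isMinOn hSne hg_cont.continuousOn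
        have hv₀min : ∀ y ∈ {v : Euc n | ‖v‖ = 1 ∧ min δ 1 ≤ ‖v - u₀‖}, g v₀ ≤ g y :=
          fun y hy => hv₀min' hy
        have hv₀ne : v₀ ≠ u₀ := by
          intro hcon
          rw [hcon] at hv₀S
          have h1 := hv₀S.2
          simp only [sub_self, norm_zero] at h1
          linarith [lt_min hδpos one_pos]
        have hmpos : 0 < g v₀ := hgpos v₀ hv₀S.1 hv₀ne
        refine ⟨min (c/4) (g v₀ / 2), lt_min (by positivity) (by positivity), fun v hv => ?_⟩
        by_cases hvd : ‖v - u₀‖ < min δ 1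
        · have hl := hlocal v hv hvd
          rw [hone_sub v hv]
          have h1 : min (c/4) (g v₀/2) ≤ c/4 := min_le_left _ _
          nlinarith [sq_nonneg ‖v - u₀‖, lt_min (by positivity : (0:ℝ) < c/4)
            (by positivity : (0:ℝ) < g v₀/2)]
        · have hvS : v ∈ {v : Euc n | ‖v‖ = 1 ∧ min δ 1 ≤ ‖v - u₀‖} := ⟨hv, le_of_not_gt hvd⟩
          have h1 := hv₀min v hvS
          have h2 : ⟪u₀, v⟫ ≤ 1 := by
            have h3 := real_inner_le_norm u₀ v
            rw [hu₀, hv] at h3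
            linarith
          have h3 : -1 ≤ ⟪u₀, v⟫ := by
            have h4 := abs_real_inner_le_norm u₀ v
            rw [hu₀, hv] at h4
            have h5 := (abs_le.mp (by linarith : |⟪u₀, v⟫| ≤ 1)).1
            linarith
          have h4 : min (c/4) (g v₀/2) ≤ g v₀/2 := min_le_right _ _
          calc min (c/4) (g v₀/2) * (1 - ⟪u₀, v⟫)
              ≤ (g v₀/2) * (1 - ⟪u₀, v⟫) := by
                apply mul_le_mul_of_nonneg_right h4 (by linarith)
            _ ≤ (g v₀/2) * 2 := by
                apply mul_le_mul_of_nonneg_left (by linarith) (by positivity)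
            _ = g v₀ := by ring
            _ ≤ g v := h1
    obtain ⟨r, hr, hrbound⟩ := hrex
    exact ⟨r, hr, hball_of r hr (hscale r hr hrbound)⟩
  · rintro ⟨r, hr, hball⟩
    have hkey := hbound_of_ball r hr hball
    have hAperp : ∀ w : Euc n, ⟪w, u₀⟫ = 0 → r * ‖w‖ ^ 2 ≤ ⟪A w, w⟫ := by
      intro w hw
      have hinner0 : ⟪u₀, w⟫ = 0 := by rw [real_inner_comm]; exact hw
      have hload : ∀ᶠ t in 𝓝[>] (0:ℝ),
          r * ‖w‖ ^ 2 / (Real.sqrt (1 + t ^ 2 * ‖w‖ ^ 2) + 1) ≤ g (u₀ + t • w) / t ^ 2 := by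
        filter_upwards [self_mem_nhdsWithin] with t ht
        rw [Set.mem_Ioi] at ht
        have h1 := hkey (u₀ + t • w)
        have hnn : ‖u₀ + t • w‖ = Real.sqrt (1 + t ^ 2 * ‖w‖ ^ 2) := by
          rw [← Real.sqrt_sq (norm_nonneg (u₀ + t • w))]
          congr 1
          rw [norm_add_sq_real, hu₀, real_inner_smul_right, hinner0, norm_smul,
            Real.norm_eq_abs, mul_pow, sq_abs]
          ring
        have hinner1 : ⟪u₀, u₀ + t • w⟫ = 1 := by
          rw [inner_add_right, hu₀u₀, real_inner_smul_right, hinner0]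
          ring
        rw [hnn, hinner1] at h1
        have hsqpos : 0 < Real.sqrt (1 + t ^ 2 * ‖w‖ ^ 2) + 1 := by positivity
        rw [div_le_div_iff₀ hsqpos (by positivity)]
        have hX : Real.sqrt (1 + t ^ 2 * ‖w‖ ^ 2) ^ 2 = 1 + t ^ 2 * ‖w‖ ^ 2 :=
          Real.sq_sqrt (by positivity)
        nlinarith [mul_le_mul_of_nonneg_right h1 hsqpos.le, hX]
      have hrhs : Tendsto (fun t : ℝ => r * ‖w‖ ^ 2 / (Real.sqrt (1 + t ^ 2 * ‖w‖ ^ 2) + 1))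
          (𝓝[>] (0:ℝ)) (𝓝 (r * ‖w‖ ^ 2 / 2)) := by
        have hcont : ContinuousAt
            (fun t : ℝ => r * ‖w‖ ^ 2 / (Real.sqrt (1 + t ^ 2 * ‖w‖ ^ 2) + 1)) 0 := by
          apply ContinuousAt.div continuousAt_const
          · exact ((Real.continuous_sqrt.continuousAt).comp (by fun_prop)).add continuousAt_const
          · norm_num
        have h2 : Tendsto (fun t : ℝ => r * ‖w‖ ^ 2 / (Real.sqrt (1 + t ^ 2 * ‖w‖ ^ 2) + 1))
            (𝓝[>] (0:ℝ)) (𝓝 (r * ‖w‖ ^ 2 / (Real.sqrt (1 + (0:ℝ) ^ 2 * ‖w‖ ^ 2) + 1))) :=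
          hcont.tendsto.mono_left nhdsWithin_le_nhds
        have hval0 : r * ‖w‖ ^ 2 / (Real.sqrt (1 + (0:ℝ) ^ 2 * ‖w‖ ^ 2) + 1)
            = r * ‖w‖ ^ 2 / 2 := by
          norm_num
        rw [hval0] at h2
        exact h2
      have hfinal := le_of_tendsto_of_tendsto hrhs (hquadlim w) hload
      linarith
    refine ⟨min r 1, lt_min hr one_pos, fun v => ?_⟩
    have hdec := norm_sq_decomp hu₀ v
    have h1 := hAperp (v - ⟪v, u₀⟫ • u₀) (inner_perp_part hu₀ v)
    rw [← hquadB v] at h1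
    rw [hBapp]
    have hminr : min r 1 ≤ r := min_le_left _ _
    have hmin1 : min r 1 ≤ 1 := min_le_right _ _
    nlinarith [sq_nonneg ‖v - ⟪v, u₀⟫ • u₀‖, sq_nonneg ⟪v, u₀⟫,
      lt_min hr one_pos, norm_nonneg (v - ⟪v, u₀⟫ • u₀)]



end
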